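/- Let d = (a,b) with Σ a_n = Σ b_n + 1 and indices i, j with a_j < a_i - 1. Set d_{-i} = (a - e_i, b), d_{-j} = (a - e_j, b), and let X_k (0 ≤ k ≤ a_j) be defined as in the partition theorem from d. Define η_k = ‖G_{X_k}‖ / ( [∏_{l=0}^{2k-1} (a_i + a_j - l - 1)] · ‖G_{X_0}‖ ) for k ≤ ⌊(a_i + a_j - 1)/2⌋ (assuming ‖G_{X_0}‖ > 0). Then ‖G_{d_{-i}}‖ / ‖G_{d_{-j}}‖ = (a_i/a_j) · ( Σ_{k=0}^{a_j} [∏_{l=0}^{k-1}(a_j - l)][∏_{l=1}^{k}(a_i - l)] η_k ) / ( Σ_{k=0}^{a_j - 1} [∏_{l=1}^{k}(a_j - l)][∏_{l=0}^{k-1}(a_i - l)] η_k ). -/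

import Mathlib

/-- In-degree of node `v` (edge `u → v` when `A u v = true`); loops allowed. -/
def inDeg {N : ℕ} (A : Fin N → Fin N → Bool) (v : Fin N) : ℕ :=
  (Finset.univ.filter (fun u => A u v = true)).card

/-- Out-degree of node `v`. -/
def outDeg {N : ℕ} (A : Fin N → Fin N → Bool) (v : Fin N) : ℕ :=
  (Finset.univ.filter (fun u => A v u = true)).card

/-- Number of directed graphs (loops allowed, no multi-edges) realizing `(a,b)`. -/
noncomputable def numGraphs {N : ℕ} (a b : Fin N → ℕ) : ℕ :=
  Nat.card {A : Fin N → Fin N → Bool // ∀ v, inDeg A v = a v ∧ outDeg A v = b v}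

/-- Number of directed graphs realizing an integer bidegree sequence. -/
noncomputable def numGraphsZ {N : ℕ} (a b : Fin N → ℤ) : ℕ :=
  Nat.card {A : Fin N → Fin N → Bool //
    ∀ v, (inDeg A v : ℤ) = a v ∧ (outDeg A v : ℤ) = b v}

/-- `‖G_{X_k}‖`: the number of graphs realizing some residual sequence
`(a - a_i e_i - a_j e_j, b - s)` where `s : Fin N → {0,1,2}` has exactly `k`
entries equal to `2` and `∑ s = a_i + a_j - 1` (the common in-degree sum of
`d_{-i}` and `d_{-j}`). -/
noncomputable def GX {N : ℕ} (a b : Fin N → ℕ) (i j : Fin N) (k : ℕ) : ℕ :=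
  ∑ s : Fin N → Fin 3,
    (if (Finset.univ.filter (fun n => (s n : ℕ) = 2)).card = k ∧
        (∑ n, (s n : ℕ)) + 1 = a i + a j
     then numGraphsZ
            (fun n => if n = i ∨ n = j then 0 else (a n : ℤ))
            (fun n => (b n : ℤ) - ((s n : ℕ) : ℤ))
     else 0)

open Finset

section Aux
variable {N : ℕ}

lemma card_filter_or {t : Finset (Fin N)} {i j : Fin N} (hij : i ≠ j) :
    (t.filter (fun u => u = i ∨ u = j)).card
      = (if i ∈ t then 1 else 0) + (if j ∈ t then 1 else 0) := by
  classical
  rw [filter_or, filter_eq' t i, filter_eq' t j, card_union_of_disjoint]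
  · split_ifs <;> simp
  · split_ifs <;> simp <;> exact fun h => hij h

/-- zeroing columns i and j -/
def zc (i j : Fin N) (A : Fin N → Fin N → Bool) : Fin N → Fin N → Bool :=
  fun u v => if v = i ∨ v = j then false else A u v

lemma outDeg_zc (i j : Fin N) (hij : i ≠ j) (A : Fin N → Fin N → Bool) (v : Fin N) :
    outDeg A v = outDeg (zc i j A) v
      + ((if A v i = true then 1 else 0) + (if A v j = true then 1 else 0)) := by
  classical
  have h := Finset.card_filter_add_card_filter_not
    (s := univ.filter (fun u => A v u = true)) (p := fun u => u = i ∨ u = j)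
  have h1 : ((univ.filter (fun u => A v u = true)).filter (fun u => u = i ∨ u = j)).card
      = (if A v i = true then 1 else 0) + (if A v j = true then 1 else 0) := by
    rw [card_filter_or hij]
    simp
  have h2 : (univ.filter (fun u => A v u = true)).filter (fun u => ¬(u = i ∨ u = j))
      = univ.filter (fun u => zc i j A v u = true) := by
    rw [filter_filter]
    apply filter_congr
    intro u _
    by_cases hu : u = i ∨ u = j <;> simp [zc, hu]
  rw [h1, h2] at h
  unfold outDeg
  omega

lemma inDeg_zc (i j : Fin N) (A : Fin N → Fin N → Bool) (v : Fin N) :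
    inDeg (zc i j A) v = if v = i ∨ v = j then 0 else inDeg A v := by
  classical
  unfold inDeg zc
  by_cases hv : v = i ∨ v = j <;> simp [hv]

end Aux


open Finset

section Aux2
variable {N : ℕ}

lemma colfalse (B : Fin N → Fin N → Bool) (w : Fin N) (hw : inDeg B w = 0) (u : Fin N) :
    B u w = false := by
  classical
  unfold inDeg at hw
  rw [Finset.card_eq_zero, Finset.eq_empty_iff_forall_notMem] at hw
  have := hw u
  simp at this
  exact this

lemma fiber_card (a b : Fin N → ℕ) (i j : Fin N) (hij : i ≠ j) (ri rj : ℕ)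
    (c1 c2 : Fin N → Bool) :
    ((univ.filter (fun A : Fin N → Fin N → Bool =>
        ∀ v, inDeg A v = (if v = i then ri else if v = j then rj else a v) ∧ outDeg A v = b v)).filter
      (fun A => (fun u => A u i) = c1 ∧ (fun u => A u j) = c2)).card
    = if (univ.filter (fun u => c1 u = true)).card = ri
          ∧ (univ.filter (fun u => c2 u = true)).card = rj
      then (univ.filter (fun A : Fin N → Fin N → Bool => ∀ v,
          (inDeg A v : ℤ) = (if v = i ∨ v = j then 0 else (a v : ℤ)) ∧
          (outDeg A v : ℤ) = (b v : ℤ)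
            - (((if c1 v = true then 1 else 0) + (if c2 v = true then 1 else 0) : ℕ) : ℤ))).card
      else 0 := by
  classical
  -- membership facts for the LHS set
  have hmemL : ∀ A : Fin N → Fin N → Bool,
      (A ∈ (univ.filter (fun A : Fin N → Fin N → Bool =>
        ∀ v, inDeg A v = (if v = i then ri else if v = j then rj else a v) ∧ outDeg A v = b v)).filter
      (fun A => (fun u => A u i) = c1 ∧ (fun u => A u j) = c2)) ↔
      ((∀ v, inDeg A v = (if v = i then ri else if v = j then rj else a v) ∧ outDeg A v = b v)
        ∧ (∀ u, A u i = c1 u) ∧ (∀ u, A u j = c2 u)) := by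
    intro A
    simp only [mem_filter, mem_univ, true_and, funext_iff]
  -- in-degree columns give the card condition
  have hcards : ∀ A : Fin N → Fin N → Bool,
      (∀ v, inDeg A v = (if v = i then ri else if v = j then rj else a v) ∧ outDeg A v = b v) →
      (∀ u, A u i = c1 u) → (∀ u, A u j = c2 u) →
      (univ.filter (fun u => c1 u = true)).card = ri
        ∧ (univ.filter (fun u => c2 u = true)).card = rj := by
    intro A hP hc1 hc2
    constructor
    · have := (hP i).1
      rw [if_pos rfl] at this
      rw [← this]
      unfold inDeg
      apply congrArg
      apply filter_congr
      intro u _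
      rw [hc1 u]
    · have := (hP j).1
      rw [if_neg hij.symm, if_pos rfl] at this
      rw [← this]
      unfold inDeg
      apply congrArg
      apply filter_congr
      intro u _
      rw [hc2 u]
  split_ifs with hc
  · -- bijection via zeroing columns
    apply Finset.card_bij' (fun A _ => zc i j A)
      (fun A' _ => fun u v => if v = i then c1 u else if v = j then c2 u else A' u v)
    · -- forward membership
      intro A hA
      rw [hmemL] at hA
      obtain ⟨hP, hc1, hc2⟩ := hA
      simp only [mem_filter, mem_univ, true_and]
      intro v
      constructor
      · rw [inDeg_zc]
        by_cases hv : v = i ∨ v = j <;> simp [hv]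
        have := (hP v).1
        rw [if_neg (by tauto), if_neg (by tauto)] at this
        exact_mod_cast this
      · have hout := outDeg_zc i j hij A v
        have hb := (hP v).2
        rw [hc1 v, hc2 v] at hout
        have : outDeg (zc i j A) v + ((if c1 v = true then 1 else 0) + (if c2 v = true then 1 else 0)) = b v := by omega
        push_cast [← this]
        ring
    · -- backward membership
      intro A' hA'
      simp only [mem_filter, mem_univ, true_and] at hA'
      have hcol1 : ∀ u, A' u i = false := by
        apply colfalse
        have := (hA' i).1
        rw [if_pos (Or.inl rfl)] at this
        exact_mod_cast this
      have hcol2 : ∀ u, A' u j = false := by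
        apply colfalse
        have := (hA' j).1
        rw [if_pos (Or.inr rfl)] at this
        exact_mod_cast this
      rw [hmemL]
      refine ⟨?_, fun u => by simp, fun u => by simp [hij.symm]⟩
      intro v
      constructor
      · -- in-degree of ψ A'
        by_cases hvi : v = i
        · subst hvi
          rw [if_pos rfl]
          rw [← hc.1]
          unfold inDeg
          apply congrArg
          apply filter_congr
          intro u _
          simp
        · by_cases hvj : v = j
          · subst hvj
            rw [if_neg hvi, if_pos rfl]
            rw [← hc.2]
            unfold inDeg
            apply congrArg
            apply filter_congr
            intro u _
            simp [hvi]
          · rw [if_neg hvi, if_neg hvj]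
            have := (hA' v).1
            rw [if_neg (by tauto)] at this
            have h2 : inDeg (fun u w => if w = i then c1 u else if w = j then c2 u else A' u w) v
                = inDeg A' v := by
              unfold inDeg
              apply congrArg
              apply filter_congr
              intro u _
              simp [hvi, hvj]
            rw [h2]
            exact_mod_cast this
      · -- out-degree of ψ A'
        set B : Fin N → Fin N → Bool := fun u w => if w = i then c1 u else if w = j then c2 u else A' u w with hB
        have hzcB : zc i j B = A' := by
          funext u w
          by_cases hw : w = i ∨ w = j
          · rcases hw with hw | hw <;> subst hw <;> simp [zc, hcol1, hcol2]
          · push_neg at hw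
            simp [zc, hB, hw.1, hw.2, not_or.mpr hw]
        have hout := outDeg_zc i j hij B v
        rw [hzcB] at hout
        have hBi : B v i = c1 v := by simp [hB]
        have hBj : B v j = c2 v := by simp [hB, hij.symm]
        rw [hBi, hBj] at hout
        have hA'v := (hA' v).2
        have : (outDeg B v : ℤ) = (outDeg A' v : ℤ)
            + (((if c1 v = true then 1 else 0) + (if c2 v = true then 1 else 0) : ℕ) : ℤ) := by
          exact_mod_cast congrArg (Nat.cast : ℕ → ℤ) hout
        have hfin : (outDeg B v : ℤ) = (b v : ℤ) := by rw [this, hA'v]; ring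
        exact_mod_cast hfin
    · -- left inverse
      intro A hA
      rw [hmemL] at hA
      obtain ⟨hP, hc1, hc2⟩ := hA
      funext u v
      by_cases hvi : v = i
      · subst hvi; simp [zc, ← hc1 u]
      · by_cases hvj : v = j
        · subst hvj; simp [zc, hvi, ← hc2 u]
        · simp [zc, hvi, hvj]
    · -- right inverse
      intro A' hA'
      simp only [mem_filter, mem_univ, true_and] at hA'
      have hcol1 : ∀ u, A' u i = false := by
        apply colfalse
        have := (hA' i).1
        rw [if_pos (Or.inl rfl)] at this
        exact_mod_cast this
      have hcol2 : ∀ u, A' u j = false := by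
        apply colfalse
        have := (hA' j).1
        rw [if_pos (Or.inr rfl)] at this
        exact_mod_cast this
      funext u w
      by_cases hw : w = i ∨ w = j
      · rcases hw with hw | hw <;> subst hw <;> simp [zc, hcol1, hcol2]
      · push_neg at hw
        simp [zc, hw.1, hw.2, not_or.mpr hw]
  · -- empty fiber
    rw [Finset.card_eq_zero, Finset.eq_empty_iff_forall_notMem]
    intro A hA
    rw [hmemL] at hA
    obtain ⟨hP, hc1, hc2⟩ := hA
    exact hc (hcards A hP hc1 hc2)

end Aux2


open Finset

section Aux3
variable {N : ℕ}

lemma sum_val (s : Fin N → Fin 3) :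
    ∑ n, (s n : ℕ) = (univ.filter (fun n => (s n : ℕ) = 1)).card
      + 2 * (univ.filter (fun n => (s n : ℕ) = 2)).card := by
  classical
  have h : ∀ n : Fin N, (s n : ℕ)
      = (if (s n : ℕ) = 1 then 1 else 0) + 2 * (if (s n : ℕ) = 2 then 1 else 0) := by
    intro n
    have := (s n).isLt
    split_ifs <;> omega
  rw [Finset.sum_congr rfl (fun n _ => h n), Finset.sum_add_distrib, ← Finset.mul_sum]
  simp [Finset.sum_boole]

lemma split_count (s : Fin N → Fin 3) (ri rj : ℕ) :
    ((univ : Finset ((Fin N → Bool) × (Fin N → Bool))).filter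
      (fun c => (∀ n : Fin N,
            (if c.1 n = true then 1 else 0) + (if c.2 n = true then 1 else 0) = (s n : ℕ))
        ∧ (univ.filter (fun u => c.1 u = true)).card = ri
        ∧ (univ.filter (fun u => c.2 u = true)).card = rj)).card
    = if (∑ n, (s n : ℕ)) = ri + rj ∧ (univ.filter (fun n => (s n : ℕ) = 2)).card ≤ ri
      then (univ.filter (fun n => (s n : ℕ) = 1)).card.choose
            (ri - (univ.filter (fun n => (s n : ℕ) = 2)).card)
      else 0 := by
  classical
  set T1 := univ.filter (fun n => (s n : ℕ) = 1) with hT1def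
  set T2 := univ.filter (fun n => (s n : ℕ) = 2) with hT2def
  -- facts about members
  have f2 : ∀ (c : (Fin N → Bool) × (Fin N → Bool)),
      (∀ n : Fin N, (if c.1 n = true then 1 else 0) + (if c.2 n = true then 1 else 0) = (s n : ℕ)) →
      ∀ n, (s n : ℕ) = 2 → c.1 n = true ∧ c.2 n = true := by
    intro c hpt n h2
    have hn := hpt n
    constructor
    · by_contra hb
      rw [Bool.not_eq_true] at hb
      rw [hb] at hn
      simp only [Bool.false_eq_true, if_false, zero_add] at hn
      split_ifs at hn <;> omega
    · by_contra hb
      rw [Bool.not_eq_true] at hb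
      rw [hb] at hn
      simp only [Bool.false_eq_true, if_false, add_zero] at hn
      split_ifs at hn <;> omega
  have f1 : ∀ (c : (Fin N → Bool) × (Fin N → Bool)),
      (∀ n : Fin N, (if c.1 n = true then 1 else 0) + (if c.2 n = true then 1 else 0) = (s n : ℕ)) →
      ∀ n, c.1 n = true → (s n : ℕ) = 1 ∨ (s n : ℕ) = 2 := by
    intro c hpt n h1
    have hn := hpt n
    rw [h1] at hn
    simp only [if_pos rfl] at hn
    split_ifs at hn <;> omega
  have fsum : ∀ (c : (Fin N → Bool) × (Fin N → Bool)),
      (∀ n : Fin N, (if c.1 n = true then 1 else 0) + (if c.2 n = true then 1 else 0) = (s n : ℕ)) →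
      ∑ n, (s n : ℕ) = (univ.filter (fun u => c.1 u = true)).card
        + (univ.filter (fun u => c.2 u = true)).card := by
    intro c hpt
    rw [← Finset.sum_congr rfl (fun n (_ : n ∈ univ) => hpt n), Finset.sum_add_distrib]
    simp [Finset.sum_boole]
  split_ifs with hcond
  · obtain ⟨hSig, h2ri⟩ := hcond
    rw [← Finset.card_powersetCard]
    apply Finset.card_bij' (fun c _ => T1.filter (fun n => c.1 n = true))
      (fun T _ => (fun n => decide ((s n : ℕ) = 2 ∨ n ∈ T),
                   fun n => decide ((s n : ℕ) = 2 ∨ ((s n : ℕ) = 1 ∧ n ∉ T))))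
    · -- forward membership
      intro c hc
      simp only [mem_filter, mem_univ, true_and] at hc
      obtain ⟨hpt, hr1, hr2⟩ := hc
      rw [mem_powersetCard]
      refine ⟨filter_subset _ _, ?_⟩
      have hsplit := Finset.card_filter_add_card_filter_not
        (s := univ.filter (fun u => c.1 u = true)) (p := fun n => (s n : ℕ) = 2)
      have e2 : (univ.filter (fun u => c.1 u = true)).filter (fun n => (s n : ℕ) = 2) = T2 := by
        rw [hT2def]
        ext n
        simp only [mem_filter, mem_univ, true_and]
        exact ⟨fun h => h.2, fun h => ⟨(f2 c hpt n h).1, h⟩⟩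
      have e1 : (univ.filter (fun u => c.1 u = true)).filter (fun n => ¬(s n : ℕ) = 2)
          = T1.filter (fun n => c.1 n = true) := by
        rw [hT1def]
        ext n
        simp only [mem_filter, mem_univ, true_and]
        constructor
        · rintro ⟨h1, h2⟩
          rcases f1 c hpt n h1 with h | h
          · exact ⟨h, h1⟩
          · exact absurd h h2
        · rintro ⟨h1, h2⟩
          exact ⟨h2, by omega⟩
      rw [e2, e1, hr1] at hsplit
      omega
    · -- backward membership
      intro T hT
      rw [mem_powersetCard] at hT
      obtain ⟨hsub, hcard⟩ := hT
      have hsT : ∀ n ∈ T, (s n : ℕ) = 1 := by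
        intro n hn
        have := hsub hn
        rw [hT1def] at this
        simpa using this
      simp only [mem_filter, mem_univ, true_and]
      refine ⟨?_, ?_, ?_⟩
      · intro n
        have hlt := (s n).isLt
        by_cases h2 : (s n : ℕ) = 2
        · simp [h2]
        · by_cases h1 : (s n : ℕ) = 1
          · by_cases hnT : n ∈ T <;> simp [h1, h2, hnT]
          · have h0 : (s n : ℕ) = 0 := by omega
            have hnT : n ∉ T := fun hn => h1 (hsT n hn)
            simp [h0, hnT]
      · have e : (univ.filter (fun u => decide ((s u : ℕ) = 2 ∨ u ∈ T) = true)) = T2 ∪ T := by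
          ext n
          simp [hT2def]
        rw [e, card_union_of_disjoint]
        · omega
        · rw [Finset.disjoint_left]
          intro n hn hnT
          have := hsT n hnT
          rw [hT2def] at hn
          simp at hn
          omega
      · have e : (univ.filter (fun u => decide ((s u : ℕ) = 2 ∨ ((s u : ℕ) = 1 ∧ u ∉ T)) = true))
            = T2 ∪ (T1 \ T) := by
          ext n
          simp [hT2def, hT1def]
        rw [e, card_union_of_disjoint]
        · rw [card_sdiff_of_subset hsub]
          have hTle : T.card ≤ T1.card := card_le_card hsub
          have hsv := sum_val s
          rw [← hT1def, ← hT2def] at hsv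
          omega
        · rw [Finset.disjoint_left]
          intro n hn hnT
          rw [mem_sdiff, hT1def] at hnT
          rw [hT2def] at hn
          simp at hn
          simp at hnT
          omega
    · -- left inverse
      intro c hc
      simp only [mem_filter, mem_univ, true_and] at hc
      obtain ⟨hpt, hr1, hr2⟩ := hc
      have hf2 := f2 c hpt
      ext n
      · -- first component
        show decide ((s n : ℕ) = 2 ∨ n ∈ T1.filter (fun m => c.1 m = true)) = c.1 n
        have hn := hpt n
        rw [hT1def]
        cases hc1 : c.1 n <;> rw [hc1] at hn
        · simp only [decide_eq_false_iff_not]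
          push_neg
          constructor
          · intro h2
            exact absurd (hf2 n h2).1 (by simp [hc1])
          · simp [hc1]
        · simp only [decide_eq_true_iff]
          rcases f1 c hpt n hc1 with h | h
          · right; simp [h, hc1]
          · left; exact h
      · -- second component
        show decide ((s n : ℕ) = 2 ∨ ((s n : ℕ) = 1 ∧ n ∉ T1.filter (fun m => c.1 m = true))) = c.2 n
        have hn := hpt n
        have hlt := (s n).isLt
        rw [hT1def]
        cases hc2 : c.2 n <;> rw [hc2] at hn <;> cases hc1 : c.1 n <;> rw [hc1] at hn
        · -- c2 = false, c1 = false : s n = 0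
          simp at hn
          simp [← hn]
        · -- c2 = false, c1 = true : s n = 1
          simp at hn
          simp [← hn, hc1]
        · -- c2 = true, c1 = false : s n = 1
          simp at hn
          simp [← hn, hc1]
        · -- c2 = true, c1 = true : s n = 2
          simp at hn
          simp [← hn]
    · -- right inverse
      intro T hT
      rw [mem_powersetCard] at hT
      obtain ⟨hsub, hcard⟩ := hT
      ext n
      simp only [mem_filter, mem_univ, true_and, decide_eq_true_iff]
      constructor
      · rintro ⟨h1, h⟩
        rw [hT1def] at h1
        simp at h1
        rcases h with h | h
        · omega
        · exact h
      · intro hn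
        have h1 : n ∈ T1 := hsub hn
        exact ⟨h1, Or.inr hn⟩
  · -- empty
    rw [Finset.card_eq_zero, Finset.eq_empty_iff_forall_notMem]
    intro c hc
    simp only [mem_filter, mem_univ, true_and] at hc
    obtain ⟨hpt, hr1, hr2⟩ := hc
    apply hcond
    constructor
    · rw [fsum c hpt, hr1, hr2]
    · rw [← hr1]
      apply card_le_card
      intro n hn
      rw [hT2def] at hn
      simp at hn
      simp [(f2 c hpt n hn).1]
end Aux3


open Finset

section Aux4
variable {N : ℕ}

def sig3 (c : (Fin N → Bool) × (Fin N → Bool)) : Fin N → Fin 3 :=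
  fun n => if c.1 n then (if c.2 n then 2 else 1) else (if c.2 n then 1 else 0)

lemma sig3_val (c : (Fin N → Bool) × (Fin N → Bool)) (n : Fin N) :
    ((sig3 c n : Fin 3) : ℕ) = (if c.1 n = true then 1 else 0) + (if c.2 n = true then 1 else 0) := by
  unfold sig3
  cases h1 : c.1 n <;> cases h2 : c.2 n <;> simp [h1, h2]

lemma star (a b : Fin N → ℕ) (i j : Fin N) (hij : i ≠ j) (ri rj : ℕ) :
    numGraphs (fun n => if n = i then ri else if n = j then rj else a n) b
    = ∑ s : Fin N → Fin 3,
        (if (∑ n, (s n : ℕ)) = ri + rj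
              ∧ (univ.filter (fun n => (s n : ℕ) = 2)).card ≤ ri
          then (univ.filter (fun n => (s n : ℕ) = 1)).card.choose
                (ri - (univ.filter (fun n => (s n : ℕ) = 2)).card)
          else 0)
        * numGraphsZ (fun n => if n = i ∨ n = j then 0 else (a n : ℤ))
            (fun n => (b n : ℤ) - ((s n : ℕ) : ℤ)) := by
  classical
  have h0 : numGraphs (fun n => if n = i then ri else if n = j then rj else a n) b
      = (univ.filter (fun A : Fin N → Fin N → Bool =>
          ∀ v, inDeg A v = (if v = i then ri else if v = j then rj else a v)
            ∧ outDeg A v = b v)).card := by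
    rw [numGraphs, Nat.card_eq_fintype_card, Fintype.card_subtype]
  have hz : ∀ s : Fin N → Fin 3,
      numGraphsZ (fun n => if n = i ∨ n = j then 0 else (a n : ℤ))
          (fun n => (b n : ℤ) - ((s n : ℕ) : ℤ))
      = (univ.filter (fun A : Fin N → Fin N → Bool => ∀ v,
          (inDeg A v : ℤ) = (if v = i ∨ v = j then 0 else (a v : ℤ)) ∧
          (outDeg A v : ℤ) = (b v : ℤ) - ((s v : ℕ) : ℤ))).card := by
    intro s
    rw [numGraphsZ, Nat.card_eq_fintype_card, Fintype.card_subtype]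
  rw [h0]
  rw [Finset.card_eq_sum_card_fiberwise
    (f := fun A : Fin N → Fin N → Bool =>
      ((fun u => A u i, fun u => A u j) : (Fin N → Bool) × (Fin N → Bool)))
    (t := univ) (fun A _ => mem_univ _)]
  have step1 : ∀ c : (Fin N → Bool) × (Fin N → Bool),
      ((univ.filter (fun A : Fin N → Fin N → Bool =>
          ∀ v, inDeg A v = (if v = i then ri else if v = j then rj else a v)
            ∧ outDeg A v = b v)).filter
        (fun A => ((fun u => A u i, fun u => A u j) : (Fin N → Bool) × (Fin N → Bool)) = c)).card
      = if (univ.filter (fun u => c.1 u = true)).card = ri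
            ∧ (univ.filter (fun u => c.2 u = true)).card = rj
        then (univ.filter (fun A : Fin N → Fin N → Bool => ∀ v,
            (inDeg A v : ℤ) = (if v = i ∨ v = j then 0 else (a v : ℤ)) ∧
            (outDeg A v : ℤ) = (b v : ℤ)
              - (((if c.1 v = true then 1 else 0) + (if c.2 v = true then 1 else 0) : ℕ) : ℤ))).card
        else 0 := by
    intro c
    rw [← fiber_card a b i j hij ri rj c.1 c.2]
    congr 1
    apply filter_congr
    intro A _
    exact Prod.ext_iff
  rw [Finset.sum_congr rfl (fun c _ => step1 c)]
  rw [← Finset.sum_fiberwise_of_maps_to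
    (g := sig3) (t := (univ : Finset (Fin N → Fin 3))) (fun c _ => mem_univ _)]
  apply Finset.sum_congr rfl
  intro s _
  have hfib : ∀ c ∈ univ.filter (fun c : (Fin N → Bool) × (Fin N → Bool) => sig3 c = s),
      (if (univ.filter (fun u => c.1 u = true)).card = ri
            ∧ (univ.filter (fun u => c.2 u = true)).card = rj
        then (univ.filter (fun A : Fin N → Fin N → Bool => ∀ v,
            (inDeg A v : ℤ) = (if v = i ∨ v = j then 0 else (a v : ℤ)) ∧
            (outDeg A v : ℤ) = (b v : ℤ)
              - (((if c.1 v = true then 1 else 0) + (if c.2 v = true then 1 else 0) : ℕ) : ℤ))).card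
        else 0)
      = (if (univ.filter (fun u => c.1 u = true)).card = ri
            ∧ (univ.filter (fun u => c.2 u = true)).card = rj
        then (univ.filter (fun A : Fin N → Fin N → Bool => ∀ v,
            (inDeg A v : ℤ) = (if v = i ∨ v = j then 0 else (a v : ℤ)) ∧
            (outDeg A v : ℤ) = (b v : ℤ) - ((s v : ℕ) : ℤ))).card
        else 0) := by
    intro c hc
    simp only [mem_filter, mem_univ, true_and] at hc
    have hsv : ∀ v : Fin N,
        ((if c.1 v = true then 1 else 0) + (if c.2 v = true then 1 else 0) : ℕ) = (s v : ℕ) := by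
      intro v
      rw [← sig3_val]
      exact congrArg Fin.val (congrFun hc v)
    simp only [hsv]
  rw [Finset.sum_congr rfl hfib]
  rw [Finset.sum_ite, Finset.sum_const, Finset.sum_const_zero, add_zero, smul_eq_mul]
  rw [filter_filter]
  have hpred : univ.filter (fun c : (Fin N → Bool) × (Fin N → Bool) =>
        sig3 c = s ∧ ((univ.filter (fun u => c.1 u = true)).card = ri
          ∧ (univ.filter (fun u => c.2 u = true)).card = rj))
      = univ.filter (fun c : (Fin N → Bool) × (Fin N → Bool) =>
        (∀ n : Fin N,
            (if c.1 n = true then 1 else 0) + (if c.2 n = true then 1 else 0) = (s n : ℕ))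
          ∧ (univ.filter (fun u => c.1 u = true)).card = ri
          ∧ (univ.filter (fun u => c.2 u = true)).card = rj) := by
    apply filter_congr
    intro c _
    constructor
    · rintro ⟨h1, h2⟩
      refine ⟨fun n => ?_, h2⟩
      rw [← sig3_val]
      exact congrArg Fin.val (congrFun h1 n)
    · rintro ⟨h1, h2⟩
      refine ⟨funext fun n => Fin.ext ?_, h2⟩
      rw [sig3_val]
      exact h1 n
  rw [hpred, split_count]
  rw [hz s]

end Aux4


open Finset

section Aux5
variable {N : ℕ}

lemma sumI (a b : Fin N → ℕ) (i j : Fin N) (hij : i ≠ j) (hj : 0 < a j) (h : a j + 1 < a i) :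
    numGraphs (fun n => if n = i then a i - 1 else a n) b
    = ∑ k ∈ Finset.range (a j + 1),
        (a i + a j - 1 - 2 * k).choose (a i - 1 - k) * GX a b i j k := by
  classical
  have h1 : (fun n => if n = i then a i - 1 else a n)
      = (fun n => if n = i then a i - 1 else if n = j then a j else a n) := by
    funext n
    by_cases hni : n = i
    · simp [hni]
    · by_cases hnj : n = j <;> simp [hni, hnj]
  rw [h1, star a b i j hij (a i - 1) (a j)]
  unfold GX
  simp only [Finset.mul_sum]
  rw [Finset.sum_comm]
  apply Finset.sum_congr rfl
  intro s _
  set t := (univ.filter (fun n => (s n : ℕ) = 2)).card with ht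
  set o := (univ.filter (fun n => (s n : ℕ) = 1)).card with ho
  set Z := numGraphsZ (fun n => if n = i ∨ n = j then 0 else (a n : ℤ))
      (fun n => (b n : ℤ) - ((s n : ℕ) : ℤ)) with hZ
  have hval : ∑ n, (s n : ℕ) = o + 2 * t := sum_val s
  have hmul : ∀ k : ℕ, (a i + a j - 1 - 2 * k).choose (a i - 1 - k)
        * (if t = k ∧ (∑ n, (s n : ℕ)) + 1 = a i + a j then Z else 0)
      = (if k = t ∧ (∑ n, (s n : ℕ)) + 1 = a i + a j
          then (a i + a j - 1 - 2 * k).choose (a i - 1 - k) * Z else 0) := by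
    intro k
    by_cases hk : t = k ∧ (∑ n, (s n : ℕ)) + 1 = a i + a j
    · rw [if_pos hk, if_pos ⟨hk.1.symm, hk.2⟩]
    · rw [if_neg hk, if_neg (fun hh => hk ⟨hh.1.symm, hh.2⟩), mul_zero]
  rw [Finset.sum_congr rfl (fun k _ => hmul k)]
  by_cases hcond : (∑ n, (s n : ℕ)) + 1 = a i + a j
  · simp only [hcond, eq_self_iff_true, and_true]
    rw [Finset.sum_ite_eq' (Finset.range (a j + 1)) t
      (fun k => (a i + a j - 1 - 2 * k).choose (a i - 1 - k) * Z)]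
    by_cases htj : t ≤ a j
    · have hmem : t ∈ Finset.range (a j + 1) := Finset.mem_range.mpr (by omega)
      rw [if_pos hmem]
      have hcpos : (∑ n, (s n : ℕ)) = a i - 1 + a j ∧ t ≤ a i - 1 := ⟨by omega, by omega⟩
      rw [if_pos hcpos]
      have hoe : o = a i + a j - 1 - 2 * t := by omega
      rw [hoe]
    · have hmem : t ∉ Finset.range (a j + 1) := by
        rw [Finset.mem_range]
        omega
      rw [if_neg hmem]
      by_cases hti : t ≤ a i - 1
      · have hcpos : (∑ n, (s n : ℕ)) = a i - 1 + a j ∧ t ≤ a i - 1 := ⟨by omega, hti⟩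
        rw [if_pos hcpos, Nat.choose_eq_zero_of_lt (by omega), zero_mul]
      · have hcneg : ¬((∑ n, (s n : ℕ)) = a i - 1 + a j ∧ t ≤ a i - 1) := fun hh => hti hh.2
        rw [if_neg hcneg, zero_mul]
  · have hcneg : ¬((∑ n, (s n : ℕ)) = a i - 1 + a j ∧ t ≤ a i - 1) := fun hh => hcond (by omega)
    rw [if_neg hcneg, zero_mul]
    exact (Finset.sum_eq_zero (fun k _ => if_neg (fun hh => hcond hh.2))).symm

lemma sumJ (a b : Fin N → ℕ) (i j : Fin N) (hij : i ≠ j) (hj : 0 < a j) (h : a j + 1 < a i) :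
    numGraphs (fun n => if n = j then a j - 1 else a n) b
    = ∑ k ∈ Finset.range (a j),
        (a i + a j - 1 - 2 * k).choose (a j - 1 - k) * GX a b i j k := by
  classical
  have h1 : (fun n => if n = j then a j - 1 else a n)
      = (fun n => if n = j then a j - 1 else if n = i then a i else a n) := by
    funext n
    by_cases hnj : n = j
    · simp [hnj]
    · by_cases hni : n = i <;> simp [hni, hnj]
  rw [h1, star a b j i hij.symm (a j - 1) (a i)]
  have hor : (fun n : Fin N => if n = j ∨ n = i then (0:ℤ) else (a n : ℤ))
      = (fun n : Fin N => if n = i ∨ n = j then (0:ℤ) else (a n : ℤ)) := by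
    funext n
    exact if_congr or_comm rfl rfl
  rw [hor]
  unfold GX
  simp only [Finset.mul_sum]
  rw [Finset.sum_comm]
  apply Finset.sum_congr rfl
  intro s _
  set t := (univ.filter (fun n => (s n : ℕ) = 2)).card with ht
  set o := (univ.filter (fun n => (s n : ℕ) = 1)).card with ho
  set Z := numGraphsZ (fun n => if n = i ∨ n = j then 0 else (a n : ℤ))
      (fun n => (b n : ℤ) - ((s n : ℕ) : ℤ)) with hZ
  have hval : ∑ n, (s n : ℕ) = o + 2 * t := sum_val s
  have hmul : ∀ k : ℕ, (a i + a j - 1 - 2 * k).choose (a j - 1 - k)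
        * (if t = k ∧ (∑ n, (s n : ℕ)) + 1 = a i + a j then Z else 0)
      = (if k = t ∧ (∑ n, (s n : ℕ)) + 1 = a i + a j
          then (a i + a j - 1 - 2 * k).choose (a j - 1 - k) * Z else 0) := by
    intro k
    by_cases hk : t = k ∧ (∑ n, (s n : ℕ)) + 1 = a i + a j
    · rw [if_pos hk, if_pos ⟨hk.1.symm, hk.2⟩]
    · rw [if_neg hk, if_neg (fun hh => hk ⟨hh.1.symm, hh.2⟩), mul_zero]
  rw [Finset.sum_congr rfl (fun k _ => hmul k)]
  by_cases hcond : (∑ n, (s n : ℕ)) + 1 = a i + a j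
  · simp only [hcond, eq_self_iff_true, and_true]
    rw [Finset.sum_ite_eq' (Finset.range (a j)) t
      (fun k => (a i + a j - 1 - 2 * k).choose (a j - 1 - k) * Z)]
    by_cases htj : t ≤ a j - 1
    · have hmem : t ∈ Finset.range (a j) := Finset.mem_range.mpr (by omega)
      rw [if_pos hmem]
      have hcpos : (∑ n, (s n : ℕ)) = a j - 1 + a i ∧ t ≤ a j - 1 := ⟨by omega, htj⟩
      rw [if_pos hcpos]
      have hoe : o = a i + a j - 1 - 2 * t := by omega
      rw [hoe]
    · have hmem : t ∉ Finset.range (a j) := by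
        rw [Finset.mem_range]
        omega
      rw [if_neg hmem]
      have hcneg : ¬((∑ n, (s n : ℕ)) = a j - 1 + a i ∧ t ≤ a j - 1) := fun hh => htj hh.2
      rw [if_neg hcneg, zero_mul]
  · have hcneg : ¬((∑ n, (s n : ℕ)) = a j - 1 + a i ∧ t ≤ a j - 1) := fun hh => hcond (by omega)
    rw [if_neg hcneg, zero_mul]
    exact (Finset.sum_eq_zero (fun k _ => if_neg (fun hh => hcond hh.2))).symm

end Aux5


open Finset

lemma chooseA (n r : ℕ) (h1 : 1 ≤ r) (h2 : r ≤ n) :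
    r * n.choose r = n * (n-1).choose (r-1) := by
  have hthis := Nat.add_one_mul_choose_eq (n-1) (r-1)
  rw [show n - 1 + 1 = n by omega, show r - 1 + 1 = r by omega] at hthis
  rw [mul_comm]
  exact hthis.symm

lemma chooseB (m t : ℕ) (hm : 1 ≤ m) :
    (m - t) * m.choose t = m * (m-1).choose t := by
  have h1 := Nat.choose_succ_right_eq m t
  have h2 := Nat.add_one_mul_choose_eq (m-1) t
  rw [show m - 1 + 1 = m by omega] at h2
  rw [h2, h1]
  exact mul_comm _ _

lemma key (u v : ℕ) : ∀ k, k ≤ u → k ≤ v →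
    v.descFactorial k * u.descFactorial k * (u+v).choose u
    = (u + v - 2*k).choose (u - k) * (u+v).descFactorial (2*k) := by
  intro k
  induction k with
  | zero => intro _ _; simp
  | succ k IH =>
    intro hku hkv
    have IHk := IH (by omega) (by omega)
    set n := u + v - 2*k with hn
    set r := u - k with hr
    have hstep : (v-k) * ((u-k) * (n.choose r)) = (n-1) * (n * ((n-2).choose (r-1))) := by
      have hr1 : 1 ≤ r := by omega
      have hrn : r ≤ n := by omega
      have hA := chooseA n r hr1 hrn
      have hB := chooseB (n-1) (r-1) (by omega)
      have hvk : v - k = n - r := by omega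
      have hnr : (n-1) - (r-1) = n - r := by omega
      have hn2 : n - 1 - 1 = n - 2 := by omega
      calc (v-k) * ((u-k) * n.choose r) = (n - r) * (r * n.choose r) := by rw [← hvk, ← hr]
        _ = (n - r) * (n * (n-1).choose (r-1)) := by rw [hA]
        _ = n * (((n-1) - (r-1)) * (n-1).choose (r-1)) := by rw [hnr]; ring
        _ = n * ((n-1) * (n-2).choose (r-1)) := by rw [hB, hn2]
        _ = (n-1) * (n * (n-2).choose (r-1)) := by ring
    have hd1 : v.descFactorial (k+1) = (v - k) * v.descFactorial k := Nat.descFactorial_succ v k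
    have hd2 : u.descFactorial (k+1) = (u - k) * u.descFactorial k := Nat.descFactorial_succ u k
    have hd3 : (u+v).descFactorial (2*(k+1)) = (n - 1) * (n * (u+v).descFactorial (2*k)) := by
      rw [show 2*(k+1) = (2*k + 1) + 1 by ring, Nat.descFactorial_succ, Nat.descFactorial_succ]
      rw [show u + v - (2*k+1) = n - 1 by omega, show u + v - 2*k = n from hn.symm ▸ rfl]
    have hd4 : u + v - 2*(k+1) = n - 2 := by omega
    have hd5 : u - (k+1) = r - 1 := by omega
    rw [hd1, hd2, hd3, hd4, hd5]
    calc (v - k) * v.descFactorial k * ((u - k) * u.descFactorial k) * (u+v).choose u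
        = (v-k) * ((u-k) * (v.descFactorial k * u.descFactorial k * (u+v).choose u)) := by ring
      _ = (v-k) * ((u-k) * ((u + v - 2*k).choose (u - k) * (u+v).descFactorial (2*k))) := by rw [IHk]
      _ = ((v-k) * ((u-k) * (n.choose r))) * (u+v).descFactorial (2*k) := by ring
      _ = ((n-1) * (n * ((n-2).choose (r-1)))) * (u+v).descFactorial (2*k) := by rw [hstep]
      _ = (n-2).choose (r-1) * ((n - 1) * (n * (u+v).descFactorial (2*k))) := by ring

lemma dF_pos (n : ℕ) : ∀ k, k ≤ n → 0 < n.descFactorial k := by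
  intro k
  induction k with
  | zero => intro _; simp
  | succ k IH =>
    intro hk
    rw [Nat.descFactorial_succ]
    exact Nat.mul_pos (by omega) (IH (by omega))

lemma cast_dF (n : ℕ) : ∀ k, k ≤ n →
    ((n.descFactorial k : ℕ) : ℝ) = ∏ l ∈ Finset.range k, ((n:ℝ) - l) := by
  intro k
  induction k with
  | zero => intro _; simp
  | succ k IH =>
    intro hk
    rw [Nat.descFactorial_succ, Finset.prod_range_succ, ← IH (by omega)]
    push_cast [Nat.cast_sub (by omega : k ≤ n)]
    ring

/-- Corollary 2: with `∑ a = ∑ b + 1`, `0 < a_j` and `a_j < a_i - 1`, setting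
`η_k = ‖G_{X_k}‖ / (∏_{l=0}^{2k-1}(a_i + a_j - l - 1) · ‖G_{X_0}‖)`,
`‖G_{d_{-i}}‖ / ‖G_{d_{-j}}‖ = (a_i/a_j) ·
 (∑_{k=0}^{a_j} ∏_{l=0}^{k-1}(a_j - l) ∏_{l=1}^{k}(a_i - l) η_k) /
 (∑_{k=0}^{a_j-1} ∏_{l=1}^{k}(a_j - l) ∏_{l=0}^{k-1}(a_i - l) η_k)`. -/
theorem stmt_5 (N : ℕ) (a b : Fin N → ℕ) (i j : Fin N) (hij : i ≠ j)
    (hsum : ∑ n, a n = (∑ n, b n) + 1)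
    (hj : 0 < a j) (h : a j + 1 < a i)
    (hGX0 : 0 < GX a b i j 0)
    (hden : 0 < numGraphs (fun n => if n = j then a j - 1 else a n) b) :
    (numGraphs (fun n => if n = i then a i - 1 else a n) b : ℝ) /
      (numGraphs (fun n => if n = j then a j - 1 else a n) b : ℝ) =
    ((a i : ℝ) / (a j : ℝ)) *
      ((∑ k ∈ Finset.range (a j + 1),
          (∏ l ∈ Finset.range k, ((a j : ℝ) - l)) *
          (∏ l ∈ Finset.range k, ((a i : ℝ) - (l + 1))) *
          ((GX a b i j k : ℝ) /
            ((∏ l ∈ Finset.range (2 * k), ((a i : ℝ) + (a j : ℝ) - l - 1)) *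
              (GX a b i j 0 : ℝ)))) /
       (∑ k ∈ Finset.range (a j),
          (∏ l ∈ Finset.range k, ((a j : ℝ) - (l + 1))) *
          (∏ l ∈ Finset.range k, ((a i : ℝ) - l)) *
          ((GX a b i j k : ℝ) /
            ((∏ l ∈ Finset.range (2 * k), ((a i : ℝ) + (a j : ℝ) - l - 1)) *
              (GX a b i j 0 : ℝ))))) := by
  classical
  have hI := sumI a b i j hij hj h
  have hJ := sumJ a b i j hij hj h
  have hG0 : (0:ℝ) < (GX a b i j 0 : ℝ) := by exact_mod_cast hGX0
  have hP : ∀ k, k ≤ a j →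
      (∏ l ∈ Finset.range (2 * k), ((a i : ℝ) + (a j : ℝ) - l - 1))
        = (((a i + a j - 1).descFactorial (2 * k) : ℕ) : ℝ) := by
    intro k hk
    rw [cast_dF (a i + a j - 1) (2 * k) (by omega)]
    apply Finset.prod_congr rfl
    intro l _
    rw [Nat.cast_sub (by omega : 1 ≤ a i + a j), Nat.cast_add]
    ring
  have hPpos : ∀ k, k ≤ a j → (0:ℝ) < (((a i + a j - 1).descFactorial (2 * k) : ℕ) : ℝ) := by
    intro k hk
    exact_mod_cast dF_pos (a i + a j - 1) (2 * k) (by omega)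
  have hAj : ∀ k, k ≤ a j → (∏ l ∈ Finset.range k, ((a j : ℝ) - l))
      = (((a j).descFactorial k : ℕ) : ℝ) := fun k hk => (cast_dF _ _ hk).symm
  have hAi1 : ∀ k, k ≤ a j → (∏ l ∈ Finset.range k, ((a i : ℝ) - (l + 1)))
      = (((a i - 1).descFactorial k : ℕ) : ℝ) := by
    intro k hk
    rw [cast_dF (a i - 1) k (by omega)]
    apply Finset.prod_congr rfl
    intro l _
    rw [Nat.cast_sub (by omega : 1 ≤ a i)]
    push_cast
    ring
  have hAj1 : ∀ k, k < a j → (∏ l ∈ Finset.range k, ((a j : ℝ) - (l + 1)))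
      = (((a j - 1).descFactorial k : ℕ) : ℝ) := by
    intro k hk
    rw [cast_dF (a j - 1) k (by omega)]
    apply Finset.prod_congr rfl
    intro l _
    rw [Nat.cast_sub (by omega : 1 ≤ a j)]
    push_cast
    ring
  have hAi : ∀ k, k < a j → (∏ l ∈ Finset.range k, ((a i : ℝ) - l))
      = (((a i).descFactorial k : ℕ) : ℝ) := fun k hk => (cast_dF _ _ (by omega)).symm
  have hA : ((∑ k ∈ Finset.range (a j + 1),
        (a i + a j - 1 - 2 * k).choose (a i - 1 - k) * GX a b i j k : ℕ) : ℝ)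
      = (((a i + a j - 1).choose (a i - 1) : ℕ) : ℝ) * ((GX a b i j 0 : ℝ) *
          (∑ k ∈ Finset.range (a j + 1),
            (∏ l ∈ Finset.range k, ((a j : ℝ) - l)) *
            (∏ l ∈ Finset.range k, ((a i : ℝ) - (l + 1))) *
            ((GX a b i j k : ℝ) /
              ((∏ l ∈ Finset.range (2 * k), ((a i : ℝ) + (a j : ℝ) - l - 1)) *
                (GX a b i j 0 : ℝ))))) := by
    rw [Finset.mul_sum, Finset.mul_sum]
    push_cast
    apply Finset.sum_congr rfl
    intro k hk
    rw [Finset.mem_range] at hk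
    have hk' : k ≤ a j := by omega
    rw [hAj k hk', hAi1 k hk', hP k hk']
    have hkey := key (a i - 1) (a j) k (by omega) (by omega)
    rw [show a i - 1 + a j = a i + a j - 1 by omega] at hkey
    have hkeyR : (((a j).descFactorial k : ℕ) : ℝ) * (((a i - 1).descFactorial k : ℕ) : ℝ)
        * (((a i + a j - 1).choose (a i - 1) : ℕ) : ℝ)
        = (((a i + a j - 1 - 2 * k).choose (a i - 1 - k) : ℕ) : ℝ)
          * (((a i + a j - 1).descFactorial (2 * k) : ℕ) : ℝ) := by exact_mod_cast hkey
    have hPne := (hPpos k hk').ne'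
    field_simp
    linear_combination (-(GX a b i j k : ℝ)) * hkeyR
  have hB : ((∑ k ∈ Finset.range (a j),
        (a i + a j - 1 - 2 * k).choose (a j - 1 - k) * GX a b i j k : ℕ) : ℝ)
      = (((a i + a j - 1).choose (a j - 1) : ℕ) : ℝ) * ((GX a b i j 0 : ℝ) *
          (∑ k ∈ Finset.range (a j),
            (∏ l ∈ Finset.range k, ((a j : ℝ) - (l + 1))) *
            (∏ l ∈ Finset.range k, ((a i : ℝ) - l)) *
            ((GX a b i j k : ℝ) /
              ((∏ l ∈ Finset.range (2 * k), ((a i : ℝ) + (a j : ℝ) - l - 1)) *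
                (GX a b i j 0 : ℝ))))) := by
    rw [Finset.mul_sum, Finset.mul_sum]
    push_cast
    apply Finset.sum_congr rfl
    intro k hk
    rw [Finset.mem_range] at hk
    have hk' : k ≤ a j := by omega
    rw [hAj1 k hk, hAi k hk, hP k hk']
    have hkey := key (a j - 1) (a i) k (by omega) (by omega)
    rw [show a j - 1 + a i = a i + a j - 1 by omega] at hkey
    have hkeyR : (((a i).descFactorial k : ℕ) : ℝ) * (((a j - 1).descFactorial k : ℕ) : ℝ)
        * (((a i + a j - 1).choose (a j - 1) : ℕ) : ℝ)
        = (((a i + a j - 1 - 2 * k).choose (a j - 1 - k) : ℕ) : ℝ)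
          * (((a i + a j - 1).descFactorial (2 * k) : ℕ) : ℝ) := by exact_mod_cast hkey
    have hPne := (hPpos k hk').ne'
    field_simp
    linear_combination (-(GX a b i j k : ℝ)) * hkeyR
  rw [hI, hJ, hA, hB]
  -- ratio identity
  have hratN : a j * (a i + a j - 1).choose (a i - 1) = a i * (a i + a j - 1).choose (a j - 1) := by
    have e1 : (a i + a j - 1).choose (a i - 1) = (a i + a j - 1).choose (a j) := by
      rw [← Nat.choose_symm (by omega : a i - 1 ≤ a i + a j - 1),
        show a i + a j - 1 - (a i - 1) = a j by omega]
    have e2 := Nat.choose_succ_right_eq (a i + a j - 1) (a j - 1)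
    rw [show a j - 1 + 1 = a j by omega, show a i + a j - 1 - (a j - 1) = a i by omega] at e2
    calc a j * (a i + a j - 1).choose (a i - 1) = (a i + a j - 1).choose (a j) * a j := by
          rw [e1]; ring
      _ = (a i + a j - 1).choose (a j - 1) * a i := e2
      _ = a i * (a i + a j - 1).choose (a j - 1) := by ring
  have hrat : (a j : ℝ) * (((a i + a j - 1).choose (a i - 1) : ℕ) : ℝ)
      = (a i : ℝ) * (((a i + a j - 1).choose (a j - 1) : ℕ) : ℝ) := by exact_mod_cast hratN
  -- nonvanishing of denominator pieces
  have hdenne : (((a i + a j - 1).choose (a j - 1) : ℕ) : ℝ) * ((GX a b i j 0 : ℝ) *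
      (∑ k ∈ Finset.range (a j),
            (∏ l ∈ Finset.range k, ((a j : ℝ) - (l + 1))) *
            (∏ l ∈ Finset.range k, ((a i : ℝ) - l)) *
            ((GX a b i j k : ℝ) /
              ((∏ l ∈ Finset.range (2 * k), ((a i : ℝ) + (a j : ℝ) - l - 1)) *
                (GX a b i j 0 : ℝ))))) ≠ 0 := by
    rw [← hB]
    have hpos : 0 < ∑ k ∈ Finset.range (a j),
        (a i + a j - 1 - 2 * k).choose (a j - 1 - k) * GX a b i j k := by
      rw [← hJ]; exact hden
    exact_mod_cast hpos.ne'
  set Sd := ∑ k ∈ Finset.range (a j),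
            (∏ l ∈ Finset.range k, ((a j : ℝ) - (l + 1))) *
            (∏ l ∈ Finset.range k, ((a i : ℝ) - l)) *
            ((GX a b i j k : ℝ) /
              ((∏ l ∈ Finset.range (2 * k), ((a i : ℝ) + (a j : ℝ) - l - 1)) *
                (GX a b i j 0 : ℝ))) with hSd
  set Sn := ∑ k ∈ Finset.range (a j + 1),
            (∏ l ∈ Finset.range k, ((a j : ℝ) - l)) *
            (∏ l ∈ Finset.range k, ((a i : ℝ) - (l + 1))) *
            ((GX a b i j k : ℝ) /
              ((∏ l ∈ Finset.range (2 * k), ((a i : ℝ) + (a j : ℝ) - l - 1)) *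
                (GX a b i j 0 : ℝ))) with hSn
  set CA := (((a i + a j - 1).choose (a i - 1) : ℕ) : ℝ) with hCA
  set CB := (((a i + a j - 1).choose (a j - 1) : ℕ) : ℝ) with hCB
  set G0 := (GX a b i j 0 : ℝ) with hG0d
  have hCBne : CB ≠ 0 := fun h0 => hdenne (by rw [h0, zero_mul])
  have hSdne : Sd ≠ 0 := fun h0 => hdenne (by rw [h0, mul_zero, mul_zero])
  have hG0ne : G0 ≠ 0 := hG0.ne'
  have hajne : (a j : ℝ) ≠ 0 := by
    have : 0 < (a j : ℝ) := by exact_mod_cast hj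
    exact this.ne'
  field_simp
  linear_combination Sn * hrat
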